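/- Let R be a discrete valuation ring with uniformizer ϖ and fraction field K, let d ≥ 1, and let λ = (λ₁ ≥ λ₂ ≥ ⋯ ≥ λ_d) be a nonincreasing sequence of integers. Let V be a d-dimensional K-vector space and suppose L and L′ are R-submodules of V for which there exist a K-basis (e₁, …, e_d) of V and a nonincreasing sequence of integers α = (α₁ ≥ ⋯ ≥ α_d) such that L is the R-span of (e₁, …, e_d), L′ is the R-span of (ϖ^{α₁}e₁, …, ϖ^{α_d}e_d), and α ≤ λ in the dominance order. Then ϖ^{‖λ‖} · L ⊆ L′, where ‖λ‖ = max( Σᵢ max(λᵢ, 0), − Σᵢ min(λᵢ, 0) ). -/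

import Mathlib

/-- **Cramer-rule bound for lattice modifications.** Let `R` be a discrete valuation ring with
uniformizer `ϖ` and fraction field `K`, `d ≥ 1`, and `λ` a nonincreasing sequence of `d`
integers. If `L` and `L'` are `R`-submodules of a `d`-dimensional `K`-vector space `V` such
that, for some `K`-basis `e` of `V` and some nonincreasing sequence `α` with `α ≤ λ` in the
dominance order, `L` is the `R`-span of `(e₁, …, e_d)` and `L'` is the `R`-span of
`(ϖ^{α₁} e₁, …, ϖ^{α_d} e_d)`, then `ϖ^{‖λ‖} • L ⊆ L'`, where
`‖λ‖ = max (∑ᵢ max(λᵢ, 0)) (-∑ᵢ min(λᵢ, 0))`. -/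
theorem pow_norm_smul_lattice_le_of_invariant_le
    (R : Type*) [CommRing R] [IsDomain R] [IsDiscreteValuationRing R]
    (ϖ : R) (hϖ : Irreducible ϖ)
    (K : Type*) [Field K] [Algebra R K] [IsFractionRing R K]
    (d : ℕ) (hd : 1 ≤ d) (lam : Fin d → ℤ) (hlam : Antitone lam)
    (V : Type*) [AddCommGroup V] [Module K V] [Module R V] [IsScalarTower R K V]
    (hdim : Module.finrank K V = d)
    (L L' : Submodule R V)
    (e : Module.Basis (Fin d) K V) (α : Fin d → ℤ) (hα : Antitone α)
    (hL : L = Submodule.span R (Set.range fun i => e i))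
    (hL' : L' = Submodule.span R
      (Set.range fun i => (algebraMap R K ϖ) ^ (α i) • e i))
    (hdom_lt : ∀ k : ℕ, k < d →
      ∑ i ∈ Finset.univ.filter (fun i : Fin d => (i : ℕ) < k), α i
        ≤ ∑ i ∈ Finset.univ.filter (fun i : Fin d => (i : ℕ) < k), lam i)
    (hdom_eq : ∑ i, α i = ∑ i, lam i) :
    ∀ x ∈ L,
      (algebraMap R K ϖ) ^ (max (∑ i, max (lam i) 0) (-∑ i, min (lam i) 0)) • x ∈ L' := by
  intro x hx
  set c : K := algebraMap R K ϖ with hc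
  have hc0 : c ≠ 0 := by
    simpa [hc] using (map_ne_zero_iff _ (IsFractionRing.injective R K)).mpr hϖ.ne_zero
  set N : ℤ := max (∑ i, max (lam i) 0) (-∑ i, min (lam i) 0) with hN
  obtain ⟨i0, hi0⟩ : ∃ i : Fin d, (i : ℕ) = 0 := ⟨⟨0, hd⟩, rfl⟩
  -- α i0 ≤ lam i0
  have hα0 : α i0 ≤ lam i0 := by
    rcases eq_or_lt_of_le hd with h1 | h1
    · -- d = 1
      have huniv : (Finset.univ : Finset (Fin d)) = {i0} := by
        ext i
        simp only [Finset.mem_univ, Finset.mem_singleton, true_iff]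
        have h := i.isLt
        rw [Fin.ext_iff, hi0]
        omega
      have : ∑ i, α i = α i0 := by rw [huniv, Finset.sum_singleton]
      have h2 : ∑ i, lam i = lam i0 := by rw [huniv, Finset.sum_singleton]
      omega
    · have hf : Finset.univ.filter (fun i : Fin d => (i : ℕ) < 1) = {i0} := by
        ext i
        simp [Fin.ext_iff, Nat.lt_one_iff, hi0]
      have := hdom_lt 1 h1
      rw [hf, Finset.sum_singleton, Finset.sum_singleton] at this
      exact this
  have hαN : ∀ i : Fin d, α i ≤ N := by
    intro i
    have h1 : α i ≤ α i0 := hα (by simp [Fin.le_def, hi0])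
    have h2 : lam i0 ≤ max (lam i0) 0 := le_max_left _ _
    have h3 : max (lam i0) 0 ≤ ∑ i, max (lam i) 0 :=
      Finset.single_le_sum (f := fun i => max (lam i) 0)
        (fun i _ => le_max_right _ _) (Finset.mem_univ i0)
    have h4 : (∑ i, max (lam i) 0) ≤ N := le_max_left _ _
    omega
  subst hL hL'
  induction hx using Submodule.span_induction with
  | mem y hy =>
    obtain ⟨i, rfl⟩ := hy
    have key : c ^ N • e i = (ϖ ^ (N - α i).toNat) • (c ^ (α i) • e i) := by
      rw [← IsScalarTower.algebraMap_smul K (ϖ ^ (N - α i).toNat) (c ^ (α i) • e i),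
        smul_smul, map_pow, ← hc, ← zpow_natCast,
        Int.toNat_of_nonneg (by have := hαN i; omega), ← zpow_add₀ hc0]
      ring_nf
    rw [key]
    exact Submodule.smul_mem _ _ (Submodule.subset_span ⟨i, rfl⟩)
  | zero => simp
  | add y z _ _ hy hz => rw [smul_add]; exact Submodule.add_mem _ hy hz
  | smul r y _ hy =>
    have : c ^ N • r • y = r • (c ^ N • y) := by
      rw [← IsScalarTower.algebraMap_smul K r y, smul_smul,
        ← IsScalarTower.algebraMap_smul K r (c ^ N • y), smul_smul, mul_comm]
    rw [this]
    exact Submodule.smul_mem _ _ hy
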